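/- Convolution with the n-th Fejér kernel band-limits to [-n, n]: if h : ℝ → ℝ is continuous with |h(x)| ≤ 1 for all x, then for every positive integer n, the bounded continuous function h ∗ φ_n has distributional Fourier support contained in [-n, n]; that is, for every Schwartz function g : ℝ → ℂ whose support is disjoint from [-n, n], ∫_ℝ (h ∗ φ_n)(x) · (𝓕g)(x) dx = 0, where 𝓕g(ξ) = ∫_ℝ e^{-2πi x ξ} g(x) dx. -/

import Mathlib

open MeasureTheory Real

/-- The Fejér kernel `φ_n(x) = sin²(πnx)/(nπ²x²)` (with `φ_n(0) = n`). -/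
noncomputable def fejer (n : ℕ) (x : ℝ) : ℝ :=
  if x = 0 then (n : ℝ)
  else (Real.sin (Real.pi * n * x)) ^ 2 / (n * Real.pi ^ 2 * x ^ 2)

/-- The Fourier transform `𝓕g(ξ) = ∫_ℝ e^{-2πixξ} g(x) dx`. -/
noncomputable def ftransform (g : ℝ → ℂ) (ξ : ℝ) : ℂ :=
  ∫ x : ℝ, Complex.exp ((-2) * Real.pi * Complex.I * x * ξ) * g x

open FourierTransform

lemma fejer_nonneg (n : ℕ) (x : ℝ) : 0 ≤ fejer n x := by
  unfold fejer; split
  · positivity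
  · positivity

lemma fejer_le (n : ℕ) (hn : 0 < n) (x : ℝ) : fejer n x ≤ 2 * n * (1 + x ^ 2)⁻¹ := by
  have hn1 : (1 : ℝ) ≤ n := by exact_mod_cast hn
  have hπ : (3 : ℝ) < π := Real.pi_gt_three
  rw [show 2*(n:ℝ) * (1+x^2)⁻¹ = (2*n) / (1+x^2) by ring]
  unfold fejer; split
  · rename_i hx; subst hx
    rw [le_div_iff₀ (by positivity)]; nlinarith
  · rename_i hx
    rw [div_le_div_iff₀ (by positivity) (by positivity)]
    have h1 : Real.sin (π * n * x) ^ 2 ≤ (π * n * x) ^ 2 := Real.sin_sq_le_sq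
    have h2 : Real.sin (π * n * x) ^ 2 ≤ 1 := Real.sin_sq_le_one _
    have h0 : (1:ℝ) ≤ (n:ℝ) * π := by nlinarith
    have h3 : (1:ℝ) ≤ ((n:ℝ) * π)^2 := by nlinarith [h0]
    have h4 : x^2 ≤ ((n:ℝ)*π)^2 * x^2 := le_mul_of_one_le_left (sq_nonneg x) h3
    nlinarith [sq_nonneg x, sq_nonneg (Real.sin (π * n * x))]

lemma fejer_measurable (n : ℕ) : Measurable (fejer n) := by
  unfold fejer
  apply Measurable.ite
  · simp [Set.setOf_eq_eq_singleton]
  · exact measurable_const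
  · exact ((Real.continuous_sin.comp (by continuity)).pow 2).measurable.div
      ((measurable_id.pow_const 2).const_mul _)

lemma fejer_integrable (n : ℕ) (hn : 0 < n) : Integrable (fejer n) := by
  apply Integrable.mono' (integrable_inv_one_add_sq.const_mul (2 * n))
  · exact (fejer_measurable n).aestronglyMeasurable
  · refine Filter.Eventually.of_forall fun x => ?_
    rw [Real.norm_eq_abs, abs_of_nonneg (fejer_nonneg n x)]
    exact fejer_le n hn x

lemma hasDerivAt_cexp_real (a : ℂ) (x : ℝ) :
    HasDerivAt (fun ξ : ℝ => Complex.exp (a * ξ)) (a * Complex.exp (a * x)) x := by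
  have h1 : HasDerivAt (fun ξ : ℝ => (ξ : ℂ)) 1 x := by
    simpa using! Complex.ofRealCLM.hasDerivAt (x := x)
  have := (h1.const_mul a).cexp
  simpa [mul_comm] using this

lemma integral_linear_mul_exp (a b c : ℂ) (ha : a ≠ 0) (u v : ℝ) :
    ∫ ξ in u..v, (b + c * ξ) * Complex.exp (a * ξ) =
      ((b + c * v) * Complex.exp (a * v) / a - c * Complex.exp (a * v) / a ^ 2)
      - ((b + c * u) * Complex.exp (a * u) / a - c * Complex.exp (a * u) / a ^ 2) := by
  apply intervalIntegral.integral_eq_sub_of_hasDerivAt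
  · intro ξ _
    have he := hasDerivAt_cexp_real a ξ
    have h1 : HasDerivAt (fun ξ : ℝ => (ξ : ℂ)) 1 ξ := by
      simpa using! Complex.ofRealCLM.hasDerivAt (x := ξ)
    have hl : HasDerivAt (fun ξ : ℝ => b + c * (ξ : ℂ)) c ξ := by
      simpa using (h1.const_mul c).const_add b
    have hd := ((hl.mul he).div_const a).sub ((he.const_mul c).div_const (a ^ 2))
    convert hd using 1
    · funext x; simp only [Pi.sub_apply, Pi.mul_apply]
    · field_simp; ring
  · apply ContinuousOn.intervalIntegrable
    apply Continuous.continuousOn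
    exact (continuous_const.add (continuous_const.mul Complex.continuous_ofReal)).mul
      (Complex.continuous_exp.comp (continuous_const.mul Complex.continuous_ofReal))

lemma fejer_eq (n : ℕ) (hn : 0 < n) (t : ℝ) :
    (fejer n t : ℂ) = ∫ ξ in (-(n:ℝ))..(n:ℝ),
      ((1 - |ξ| / n : ℝ) : ℂ) * Complex.exp (2 * (π:ℂ) * Complex.I * t * ξ) := by
  have hn0 : (n:ℝ) ≠ 0 := Nat.cast_ne_zero.2 hn.ne'
  have hnn : (0:ℝ) ≤ n := Nat.cast_nonneg n
  have hcont : Continuous fun ξ : ℝ =>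
      ((1 - |ξ| / n : ℝ) : ℂ) * Complex.exp (2 * (π:ℂ) * Complex.I * t * ξ) := by
    apply Continuous.mul
    · exact Complex.continuous_ofReal.comp (by continuity)
    · exact Complex.continuous_exp.comp (continuous_const.mul Complex.continuous_ofReal)
  rw [← intervalIntegral.integral_add_adjacent_intervals (a := -(n:ℝ)) (b := 0) (c := n)
    (hcont.intervalIntegrable _ _) (hcont.intervalIntegrable _ _)]
  have hpos : (∫ ξ in (0:ℝ)..(n:ℝ),
      ((1 - |ξ| / n : ℝ) : ℂ) * Complex.exp (2 * (π:ℂ) * Complex.I * t * ξ))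
      = ∫ ξ in (0:ℝ)..(n:ℝ),
      ((1:ℂ) + (-(1:ℂ)/n) * ξ) * Complex.exp ((2 * (π:ℂ) * Complex.I * t) * ξ) := by
    apply intervalIntegral.integral_congr
    intro ξ hξ
    rw [Set.uIcc_of_le hnn] at hξ
    simp only [abs_of_nonneg hξ.1]
    push_cast
    ring
  have hneg : (∫ ξ in (-(n:ℝ))..(0:ℝ),
      ((1 - |ξ| / n : ℝ) : ℂ) * Complex.exp (2 * (π:ℂ) * Complex.I * t * ξ))
      = ∫ ξ in (-(n:ℝ))..(0:ℝ),
      ((1:ℂ) + ((1:ℂ)/n) * ξ) * Complex.exp ((2 * (π:ℂ) * Complex.I * t) * ξ) := by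
    apply intervalIntegral.integral_congr
    intro ξ hξ
    rw [Set.uIcc_of_le (by linarith : -(n:ℝ) ≤ 0)] at hξ
    simp only [abs_of_nonpos hξ.2]
    push_cast
    ring
  rw [hpos, hneg]
  by_cases ht : t = 0
  · subst ht
    simp only [Complex.ofReal_zero, mul_zero, zero_mul, Complex.exp_zero, mul_one]
    have hint : ∀ (c : ℂ) (u v : ℝ),
        (∫ ξ in u..v, ((1:ℂ) + c * (ξ:ℂ))) = ((v:ℂ) - (u:ℂ)) + c * (((v:ℂ)^2 - (u:ℂ)^2)/2) := by
      intro c u v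
      rw [intervalIntegral.integral_add intervalIntegrable_const
        ((continuous_const.mul Complex.continuous_ofReal).intervalIntegrable _ _)
          (f := fun _ => (1:ℂ)) (g := fun ξ : ℝ => c * (ξ:ℂ)),
        intervalIntegral.integral_const, intervalIntegral.integral_const_mul,
        intervalIntegral.integral_ofReal, integral_id]
      simp only [Complex.real_smul, Complex.ofReal_sub]
      push_cast
      ring
    rw [hint, hint, show fejer n 0 = (n:ℝ) from if_pos rfl]
    have hnC : ((n:ℕ):ℂ) ≠ 0 := Nat.cast_ne_zero.2 hn.ne'
    push_cast
    field_simp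
    ring
  · have ha : (2 * (π:ℂ) * Complex.I * t) ≠ 0 := by
      simp [Real.pi_ne_zero, ht, Complex.I_ne_zero]
    rw [integral_linear_mul_exp _ _ _ ha, integral_linear_mul_exp _ _ _ ha]
    simp only [Complex.ofReal_zero, mul_zero, Complex.exp_zero, mul_one]
    have e1 : Complex.exp ((2 * (π:ℂ) * Complex.I * t) * ((n:ℝ):ℂ))
        = Complex.cos ((2*π*n*t : ℝ):ℂ) + Complex.sin ((2*π*n*t : ℝ):ℂ) * Complex.I := by
      rw [show (2 * (π:ℂ) * Complex.I * t) * ((n:ℝ):ℂ) = ((2*π*n*t : ℝ):ℂ) * Complex.I by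
        push_cast; ring, Complex.exp_mul_I]
    have e2 : Complex.exp ((2 * (π:ℂ) * Complex.I * t) * (Complex.ofReal (-(n:ℝ))))
        = Complex.cos ((2*π*n*t : ℝ):ℂ) - Complex.sin ((2*π*n*t : ℝ):ℂ) * Complex.I := by
      rw [show (2 * (π:ℂ) * Complex.I * t) * (Complex.ofReal (-(n:ℝ)))
          = (-((2*π*n*t : ℝ):ℂ)) * Complex.I by
        push_cast; ring, Complex.exp_mul_I, Complex.cos_neg, Complex.sin_neg]
      ring
    rw [e1, e2]
    have hC : Complex.cos ((2*π*n*t : ℝ):ℂ) = 1 - 2 * Complex.sin ((π*n*t : ℝ):ℂ) ^ 2 := by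
      rw [show ((2*π*n*t : ℝ):ℂ) = 2 * ((π*n*t : ℝ):ℂ) by push_cast; ring, Complex.cos_two_mul]
      linear_combination 2 * (Complex.sin_sq_add_cos_sq ((π*n*t : ℝ):ℂ))
    rw [hC]
    have ha2 : (2 * (π:ℂ) * Complex.I * t) ^ 2 = -(4 * (π:ℂ)^2 * (t:ℂ)^2) := by
      rw [show (2 * (π:ℂ) * Complex.I * t) ^ 2
          = 4 * (π:ℂ)^2 * (t:ℂ)^2 * Complex.I^2 by ring, Complex.I_sq]
      ring
    rw [ha2]
    have hL : ((fejer n t : ℝ):ℂ)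
        = (Complex.sin ((π*(n:ℝ)*t : ℝ):ℂ))^2 / (((n:ℝ):ℂ) * ((π:ℝ):ℂ)^2 * ((t:ℝ):ℂ)^2) := by
      rw [fejer, if_neg ht]
      push_cast
      ring
    rw [hL]
    have hπC : ((π:ℂ)) ≠ 0 := Complex.ofReal_ne_zero.2 Real.pi_ne_zero
    have htC : ((t:ℂ)) ≠ 0 := Complex.ofReal_ne_zero.2 ht
    have hnC : (((n:ℝ)):ℂ) ≠ 0 := Complex.ofReal_ne_zero.2 hn0
    push_cast
    field_simp
    linear_combination 8 * Complex.I * (π:ℂ) * (t:ℂ) * Complex.sin ((π:ℂ) * (n:ℂ) * (t:ℂ) * 2) *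
      (mul_inv_cancel₀ (show ((n:ℕ):ℂ) ≠ 0 from Nat.cast_ne_zero.2 hn.ne'))

lemma ftransform_eq (g : ℝ → ℂ) : ftransform g = 𝓕 g := by
  ext ξ
  rw [ftransform]
  rw [Real.fourier_real_eq_integral_exp_smul]
  congr 1
  funext x
  rw [smul_eq_mul]
  congr 2
  push_cast
  ring

lemma schwartz_fourier_integrable (g : SchwartzMap ℝ ℂ) :
    Integrable (𝓕 ⇑g) := by
  have := (SchwartzMap.fourierTransformCLM ℂ g).integrable (μ := volume)
  rwa [SchwartzMap.fourierTransformCLM_apply, SchwartzMap.fourier_coe] at this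

lemma schwartz_fourier_continuous (g : SchwartzMap ℝ ℂ) :
    Continuous (𝓕 ⇑g) := by
  have := (SchwartzMap.fourierTransformCLM ℂ g).continuous
  rwa [SchwartzMap.fourierTransformCLM_apply, SchwartzMap.fourier_coe] at this

lemma schwartz_inversion (g : SchwartzMap ℝ ℂ) (ξ : ℝ) :
    ∫ s : ℝ, Complex.exp (2 * (π:ℂ) * Complex.I * s * ξ) * (𝓕 ⇑g) s
      = g ξ := by
  have h1 : 𝓕⁻ (𝓕 ⇑g) ξ = g ξ :=
    g.integrable.fourierInv_fourier_eq (schwartz_fourier_integrable g) g.continuous.continuousAt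
  have h2 : 𝓕⁻ (𝓕 ⇑g) ξ = 𝓕 (𝓕 ⇑g) (-ξ) :=
    Real.fourierInv_eq_fourier_neg _ _
  rw [← h1, h2, Real.fourier_real_eq_integral_exp_smul]
  congr 1
  funext s
  rw [smul_eq_mul]
  congr 2
  push_cast
  ring

/-- Key step: the convolution slice integral vanishes. -/
lemma fejer_slice_zero (n : ℕ) (hn : 0 < n) (g : SchwartzMap ℝ ℂ)
    (hg : ∀ ξ ∈ Set.Icc (-(n : ℝ)) (n : ℝ), g ξ = 0) (y : ℝ) :
    ∫ t : ℝ, (fejer n t : ℂ) * 𝓕 (⇑g) (t + y) = 0 := by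
  set F := 𝓕 ⇑g with hFdef
  have hFc : Continuous F := schwartz_fourier_continuous g
  have hFi : Integrable F := schwartz_fourier_integrable g
  set S : Set ℝ := Set.Ioc (-(n:ℝ)) (n:ℝ) with hSdef
  have hIoc : ∀ t : ℝ, (fejer n t : ℂ)
      = ∫ ξ in S, ((1 - |ξ| / n : ℝ) : ℂ) * Complex.exp (2 * (π:ℂ) * Complex.I * t * ξ) := by
    intro t
    rw [fejer_eq n hn t, intervalIntegral.integral_of_le (by
      have : (0:ℝ) ≤ n := Nat.cast_nonneg n
      linarith)]
  have hswap : Integrable (Function.uncurry fun (t : ℝ) (ξ : ℝ) =>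
      ((1 - |ξ| / n : ℝ) : ℂ) * Complex.exp (2 * (π:ℂ) * Complex.I * t * ξ) * F (t + y))
      (volume.prod (volume.restrict S)) := by
    have hcont : Continuous fun p : ℝ × ℝ =>
        ((1 - |p.2| / n : ℝ) : ℂ) * Complex.exp (2 * (π:ℂ) * Complex.I * p.1 * p.2)
          * F (p.1 + y) := by
      have h1 : Continuous fun p : ℝ × ℝ => ((1 - |p.2| / n : ℝ) : ℂ) :=
        Complex.continuous_ofReal.comp
          ((continuous_const.sub ((continuous_abs.comp continuous_snd).div_const _)))
      have h2 : Continuous fun p : ℝ × ℝ => Complex.exp (2 * (π:ℂ) * Complex.I * p.1 * p.2) :=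
        Complex.continuous_exp.comp
          (((continuous_const.mul (Complex.continuous_ofReal.comp continuous_fst)).mul
            (Complex.continuous_ofReal.comp continuous_snd)))
      exact (h1.mul h2).mul (hFc.comp (continuous_fst.add continuous_const))
    have hwInt : IntegrableOn (fun ξ : ℝ => |1 - |ξ| / (n:ℝ)|) S volume := by
      apply Continuous.integrableOn_Ioc
      exact continuous_abs.comp (continuous_const.sub (continuous_abs.div_const _))
    apply Integrable.mono' (((hFi.comp_add_right y).norm).mul_prod hwInt)
    · exact hcont.aestronglyMeasurable
    · refine Filter.Eventually.of_forall fun p => ?_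
      refine le_of_eq ?_
      have hz : (2 * (π:ℂ) * Complex.I * (p.1:ℂ) * (p.2:ℂ))
          = ((2 * π * p.1 * p.2 : ℝ) : ℂ) * Complex.I := by push_cast; ring
      calc ‖((1 - |p.2| / n : ℝ) : ℂ) * Complex.exp (2 * (π:ℂ) * Complex.I * p.1 * p.2)
              * F (p.1 + y)‖
          = |1 - |p.2| / n| * ‖Complex.exp (2 * (π:ℂ) * Complex.I * p.1 * p.2)‖
              * ‖F (p.1 + y)‖ := by
            rw [norm_mul, norm_mul, Complex.norm_real, Real.norm_eq_abs]
        _ = ‖F (p.1 + y)‖ * |1 - |p.2| / n| := by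
            rw [hz, Complex.norm_exp_ofReal_mul_I]; ring
  calc (∫ t : ℝ, (fejer n t : ℂ) * F (t + y))
      = ∫ t : ℝ, ∫ ξ in S,
          ((1 - |ξ| / n : ℝ) : ℂ) * Complex.exp (2 * (π:ℂ) * Complex.I * t * ξ) * F (t + y) := by
        congr 1
        funext t
        rw [hIoc t, ← integral_mul_const]
    _ = ∫ ξ in S, ∫ t : ℝ,
          ((1 - |ξ| / n : ℝ) : ℂ) * Complex.exp (2 * (π:ℂ) * Complex.I * t * ξ) * F (t + y) :=
        integral_integral_swap hswap
    _ = 0 := by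
        rw [setIntegral_congr_fun (measurableSet_Ioc) (fun ξ hξ => ?_), integral_zero]
        have key : (∫ t : ℝ, Complex.exp (2*(π:ℂ)*Complex.I*t*ξ) * F (t + y))
            = Complex.exp (-(2*(π:ℂ)*Complex.I*y*ξ)) * g ξ := by
          have h0 := MeasureTheory.integral_add_right_eq_self (μ := volume)
            (fun s : ℝ => Complex.exp (2*(π:ℂ)*Complex.I*((s:ℂ) - (y:ℂ))*ξ) * F s) y
          have h1 : ∀ t : ℝ, Complex.exp (2*(π:ℂ)*Complex.I*((((t+y : ℝ)):ℂ) - (y:ℂ))*ξ) * F (t+y)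
              = Complex.exp (2*(π:ℂ)*Complex.I*t*ξ) * F (t + y) := by
            intro t; congr 2; push_cast; ring
          simp only [h1] at h0
          rw [h0]
          have h2 : ∀ s : ℝ, Complex.exp (2*(π:ℂ)*Complex.I*((s:ℂ) - (y:ℂ))*ξ) * F s
              = Complex.exp (-(2*(π:ℂ)*Complex.I*y*ξ)) *
                  (Complex.exp (2*(π:ℂ)*Complex.I*s*ξ) * F s) := by
            intro s
            rw [← mul_assoc, ← Complex.exp_add]
            congr 2
            ring
          simp only [h2]
          rw [integral_const_mul, schwartz_inversion]
        have hg0 : (g : ℝ → ℂ) ξ = 0 := hg ξ ⟨le_of_lt hξ.1, hξ.2⟩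
        show (∫ t : ℝ, ((1 - |ξ| / n : ℝ) : ℂ)
            * Complex.exp (2 * (π:ℂ) * Complex.I * t * ξ) * F (t + y)) = 0
        simp only [mul_assoc] at key ⊢
        rw [integral_const_mul, key, hg0, mul_zero, mul_zero]

/-- Convolution with `φ_n` band-limits to `[-n, n]`: for continuous `h` with `|h| ≤ 1`,
the bounded continuous function `h ∗ φ_n` has distributional Fourier support contained in
`[-n, n]`: for every Schwartz function `g` whose support is disjoint from `[-n, n]`,
`∫ (h ∗ φ_n)(x) ⬝ (𝓕g)(x) dx = 0`. -/
theorem fejer_convolution_band_limited (h : ℝ → ℝ) (hc : Continuous h)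
    (hb : ∀ x, |h x| ≤ 1) (n : ℕ) (hn : 0 < n)
    (g : SchwartzMap ℝ ℂ) (hg : ∀ ξ ∈ Set.Icc (-(n : ℝ)) (n : ℝ), g ξ = 0) :
    ∫ x : ℝ, ((∫ t : ℝ, h (x - t) * fejer n t : ℝ) : ℂ) * ftransform g x = 0 := by
  set F := 𝓕 ⇑g with hFdef
  have hFc : Continuous F := schwartz_fourier_continuous g
  have hFi : Integrable F := schwartz_fourier_integrable g
  have hftr : ftransform ⇑g = F := ftransform_eq ⇑g
  have step1 : ∀ x : ℝ, ((∫ t : ℝ, h (x - t) * fejer n t : ℝ) : ℂ) * ftransform (⇑g) x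
      = ∫ t : ℝ, ((h t * fejer n (x - t) : ℝ) : ℂ) * F x := by
    intro x
    rw [hftr]
    have hsub : (∫ t : ℝ, h (x - t) * fejer n t) = ∫ t : ℝ, h t * fejer n (x - t) := by
      have h0 := MeasureTheory.integral_sub_left_eq_self (μ := volume)
        (fun t : ℝ => h t * fejer n (x - t)) x
      simp only [sub_sub_cancel] at h0
      exact h0.symm.symm ▸ rfl
    rw [hsub]
    rw [show ((∫ t : ℝ, h t * fejer n (x - t) : ℝ) : ℂ)
        = ∫ t : ℝ, ((h t * fejer n (x - t) : ℝ) : ℂ) from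
      (integral_ofReal (𝕜 := ℂ)).symm]
    rw [← integral_mul_const]
  have hmeasK : AEStronglyMeasurable (Function.uncurry fun (x t : ℝ) =>
      ((h t * fejer n (x - t) : ℝ) : ℂ) * F x) (volume.prod volume) := by
    apply Measurable.aestronglyMeasurable
    exact (Complex.measurable_ofReal.comp ((hc.measurable.comp measurable_snd).mul
      ((fejer_measurable n).comp (measurable_fst.sub measurable_snd)))).mul
      (hFc.measurable.comp measurable_fst)
  have e : MeasurePreserving (fun p : ℝ × ℝ => (p.1, p.1 - p.2))
      (volume.prod volume) (volume.prod volume) := by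
    have h1 : MeasurePreserving (fun p : ℝ × ℝ => (p.1, -p.2))
        (volume.prod volume) (volume.prod volume) :=
      (MeasurePreserving.id volume).prod (Measure.measurePreserving_neg volume)
    have h2 := measurePreserving_prod_add (μ := (volume : Measure ℝ)) (ν := volume)
    have h3 := h2.comp h1
    have : ((fun z : ℝ × ℝ => (z.1, z.1 + z.2)) ∘ fun p : ℝ × ℝ => (p.1, -p.2))
        = fun p : ℝ × ℝ => (p.1, p.1 - p.2) := by
      funext p; simp [sub_eq_add_neg]
    rwa [this] at h3
  have hK : Integrable (Function.uncurry fun (x t : ℝ) =>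
      ((h t * fejer n (x - t) : ℝ) : ℂ) * F x) (volume.prod volume) := by
    rw [← e.integrable_comp hmeasK]
    have hsimp : ((Function.uncurry fun (x t : ℝ) => ((h t * fejer n (x - t) : ℝ) : ℂ) * F x)
        ∘ (fun p : ℝ × ℝ => (p.1, p.1 - p.2)))
        = fun p : ℝ × ℝ => ((h (p.1 - p.2) * fejer n p.2 : ℝ) : ℂ) * F p.1 := by
      funext p
      simp [Function.uncurry, sub_sub_cancel]
    rw [hsimp]
    apply Integrable.mono' (hFi.norm.mul_prod (fejer_integrable n hn))
    · apply Measurable.aestronglyMeasurable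
      exact (Complex.measurable_ofReal.comp ((hc.measurable.comp
        (measurable_fst.sub measurable_snd)).mul
        ((fejer_measurable n).comp measurable_snd))).mul (hFc.measurable.comp measurable_fst)
    · refine Filter.Eventually.of_forall fun p => ?_
      rw [norm_mul, Complex.norm_real, Real.norm_eq_abs, abs_mul,
        abs_of_nonneg (fejer_nonneg n p.2)]
      calc |h (p.1 - p.2)| * fejer n p.2 * ‖F p.1‖
          ≤ 1 * fejer n p.2 * ‖F p.1‖ := by
            apply mul_le_mul_of_nonneg_right _ (norm_nonneg _)
            exact mul_le_mul_of_nonneg_right (hb _) (fejer_nonneg n p.2)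
        _ = ‖F p.1‖ * fejer n p.2 := by ring
  calc (∫ x : ℝ, ((∫ t : ℝ, h (x - t) * fejer n t : ℝ) : ℂ) * ftransform (⇑g) x)
      = ∫ x : ℝ, ∫ t : ℝ, ((h t * fejer n (x - t) : ℝ) : ℂ) * F x := by
        exact integral_congr_ae (Filter.Eventually.of_forall step1)
    _ = ∫ t : ℝ, ∫ x : ℝ, ((h t * fejer n (x - t) : ℝ) : ℂ) * F x :=
        integral_integral_swap hK
    _ = 0 := by
        have final : ∀ t : ℝ, (∫ x : ℝ, ((h t * fejer n (x - t) : ℝ) : ℂ) * F x) = 0 := by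
          intro t
          have hrw : ∀ x : ℝ, ((h t * fejer n (x - t) : ℝ) : ℂ) * F x
              = ((h t : ℝ) : ℂ) * ((fejer n (x - t) : ℂ) * F x) := by
            intro x; push_cast; ring
          simp only [hrw]
          have hsub2 := MeasureTheory.integral_sub_right_eq_self (μ := volume)
            (fun s : ℝ => ((h t : ℝ) : ℂ) * ((fejer n s : ℂ) * F (s + t))) t
          simp only [sub_add_cancel] at hsub2
          rw [hsub2, integral_const_mul, fejer_slice_zero n hn g hg t, mul_zero]
        simp only [final, integral_zero]
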